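/- Let M = ⊕_j M_j be a C*-direct sum (c₀- or ℓ∞-type product) of C*-algebras M_j, and let Δ : M → M be a 2-local derivation such that the restriction of Δ to each summand M_j (identified with a subalgebra via the central projection z_j) is a derivation on M_j. Then Δ is a derivation on M. -/

import Mathlib

open scoped ENNReal

/-- A 2-local derivation on the C*-direct sum `lp M ∞` of C*-algebras which restricts
to a derivation on each summand is a derivation. -/
theorem twoLocalDerivation_on_cstar_sum_is_derivation
    {ι : Type*} [DecidableEq ι] (M : ι → Type*)
    [∀ j, NormedRing (M j)] [∀ j, StarRing (M j)] [∀ j, CStarRing (M j)]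
    [∀ j, NormedAlgebra ℂ (M j)] [∀ j, CompleteSpace (M j)]
    (Δ : lp M ∞ → lp M ∞)
    -- Δ is a 2-local (inner) derivation
    (h2loc : ∀ x y : lp M ∞, ∃ d : lp M ∞,
      Δ x = d * x - x * d ∧ Δ y = d * y - y * d)
    -- Δ maps each summand into itself
    (hmaps : ∀ (j : ι) (x : lp M ∞), (∀ i, i ≠ j → x i = 0) →
      ∀ i, i ≠ j → (Δ x) i = 0)
    -- the restriction of Δ to each summand is a derivation
    (hder : ∀ (j : ι) (x y : lp M ∞), (∀ i, i ≠ j → x i = 0) →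
      (∀ i, i ≠ j → y i = 0) →
      Δ (x + y) = Δ x + Δ y ∧ Δ (x * y) = Δ x * y + x * Δ y ∧
      ∀ c : ℂ, Δ (c • x) = c • Δ x) :
    (∀ x y : lp M ∞, Δ (x + y) = Δ x + Δ y) ∧
    (∀ c : ℂ, ∀ x : lp M ∞, Δ (c • x) = c • Δ x) ∧
    (∀ x y : lp M ∞, Δ (x * y) = Δ x * y + x * Δ y) := by
  -- Key lemma: the j-th coordinate of Δ x depends only on the j-th coordinate of x.
  have key : ∀ (x y : lp M ∞) (j : ι), x j = y j → (Δ x) j = (Δ y) j := by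
    intro x y j h
    obtain ⟨d, hx, hy⟩ := h2loc x y
    have hx' : (Δ x) j = d j * x j - x j * d j := by
      rw [hx]
      simp [lp.coeFn_sub, lp.infty_coeFn_mul, Pi.sub_apply, Pi.mul_apply]
      rfl
    have hy' : (Δ y) j = d j * y j - y j * d j := by
      rw [hy]
      simp [lp.coeFn_sub, lp.infty_coeFn_mul, Pi.sub_apply, Pi.mul_apply]
      rfl
    rw [hx', hy', h]
  have hsupp : ∀ (j : ι) (a : M j), ∀ i, i ≠ j → (lp.single ∞ j a) i = 0 := by
    intro j a i hi
    exact lp.single_apply_ne ∞ j a hi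
  refine ⟨?_, ?_, ?_⟩
  · intro x y
    apply lp.ext
    funext j
    have H := (hder j (lp.single ∞ j (x j)) (lp.single ∞ j (y j))
      (hsupp j _) (hsupp j _)).1
    have h1 : (Δ (x + y)) j = (Δ (lp.single ∞ j (x j) + lp.single ∞ j (y j))) j := by
      apply key
      simp [lp.coeFn_add, Pi.add_apply, lp.single_apply_self]
    have h2 : (Δ x) j = (Δ (lp.single ∞ j (x j))) j :=
      key _ _ _ (by simp [lp.single_apply_self])
    have h3 : (Δ y) j = (Δ (lp.single ∞ j (y j))) j :=
      key _ _ _ (by simp [lp.single_apply_self])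
    rw [lp.coeFn_add, Pi.add_apply, h1, h2, h3, H, lp.coeFn_add, Pi.add_apply]
  · intro c x
    apply lp.ext
    funext j
    have H := (hder j (lp.single ∞ j (x j)) (lp.single ∞ j (x j))
      (hsupp j _) (hsupp j _)).2.2 c
    have h1 : (Δ (c • x)) j = (Δ (c • lp.single ∞ j (x j))) j := by
      apply key
      simp [lp.coeFn_smul, Pi.smul_apply, lp.single_apply_self]
    have h2 : (Δ x) j = (Δ (lp.single ∞ j (x j))) j :=
      key _ _ _ (by simp [lp.single_apply_self])
    rw [lp.coeFn_smul, Pi.smul_apply, h1, H, h2, lp.coeFn_smul, Pi.smul_apply]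
  · intro x y
    apply lp.ext
    funext j
    have H := (hder j (lp.single ∞ j (x j)) (lp.single ∞ j (y j))
      (hsupp j _) (hsupp j _)).2.1
    have h1 : (Δ (x * y)) j = (Δ (lp.single ∞ j (x j) * lp.single ∞ j (y j))) j := by
      apply key
      simp [lp.infty_coeFn_mul, Pi.mul_apply, lp.single_apply_self]
    have h2 : (Δ x) j = (Δ (lp.single ∞ j (x j))) j :=
      key _ _ _ (by simp [lp.single_apply_self])
    have h3 : (Δ y) j = (Δ (lp.single ∞ j (y j))) j :=
      key _ _ _ (by simp [lp.single_apply_self])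
    rw [h1, H]
    simp [lp.coeFn_add, lp.infty_coeFn_mul, lp.single_apply_self, ← h2, ← h3]
    show (Δ (lp.single ∞ j (x j))) j * (lp.single ∞ j (y j)) j + (lp.single ∞ j (x j)) j * (Δ (lp.single ∞ j (y j))) j = (Δ x) j * y j + x j * (Δ y) j
    simp [lp.single_apply_self, ← h2, ← h3]
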